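/- arXiv:2103.13828 — 5 statements merged into one kernel-verified Lean document; each statement's English description precedes it below -/
import Mathlib

section
/- For all nonnegative integers n and positive integers k, if the higher-order Daehee numbers D_n^{(k)} are defined by the exponential generating function (log(1+t)/t)^k = ∑_{n≥0} D_n^{(k)} t^n/n!, then D_n^{(k)} = s(n+k, k) / C(n+k, k), where s denotes the signed Stirling numbers of the first kind and C(n+k,k) is the binomial coefficient. -/
open Nat
/-- `log(1+t) = ∑_{n≥1} (-1)^{n+1} t^n / n` as a formal power series over `ℚ`. -/
noncomputable def logOneAdd : PowerSeries ℚ :=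
  PowerSeries.mk fun n => if n = 0 then 0 else (-1 : ℚ) ^ (n + 1) / n


open PowerSeries


lemma coeff_deriv_logOneAdd (n : ℕ) : coeff n (d⁄dX ℚ logOneAdd) = (-1 : ℚ) ^ n := by
  rw [coeff_derivative, logOneAdd, coeff_mk]
  simp only [Nat.succ_ne_zero, if_false]
  field_simp
  push_cast
  ring

lemma one_add_X_mul_deriv : (1 + X) * d⁄dX ℚ logOneAdd = 1 := by
  ext n
  rcases n with _ | n
  · rw [coeff_zero_eq_constantCoeff, map_mul, map_add, map_one, constantCoeff_X,
      ← coeff_zero_eq_constantCoeff, coeff_deriv_logOneAdd]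
    norm_num
  · rw [add_mul, one_mul, map_add, coeff_succ_X_mul, coeff_deriv_logOneAdd,
      coeff_deriv_logOneAdd, coeff_one]
    simp [pow_succ]

lemma coeff_X_mul_deriv (f : PowerSeries ℚ) (N : ℕ) :
    coeff N (X * d⁄dX ℚ f) = N * coeff N f := by
  rcases N with _ | N
  · rw [coeff_zero_eq_constantCoeff, map_mul, constantCoeff_X, zero_mul]
    push_cast; ring
  · rw [coeff_succ_X_mul, coeff_derivative]
    push_cast; ring

lemma rec_pow (N m : ℕ) :
    ((N : ℚ) + 1) * coeff (N + 1) (logOneAdd ^ (m + 1))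
      + N * coeff N (logOneAdd ^ (m + 1))
    = (m + 1) * coeff N (logOneAdd ^ m) := by
  have key : (1 + X) * d⁄dX ℚ (logOneAdd ^ (m + 1)) = (m + 1) • logOneAdd ^ m := by
    rw [Derivation.leibniz_pow, Nat.add_sub_cancel, smul_eq_mul, mul_smul_comm,
      show (1 + X) * (logOneAdd ^ m * d⁄dX ℚ logOneAdd)
        = logOneAdd ^ m * ((1 + X) * d⁄dX ℚ logOneAdd) by ring,
      one_add_X_mul_deriv, mul_one]
  have h := congrArg (coeff N) key
  rw [add_mul, one_mul, map_add, coeff_X_mul_deriv, coeff_derivative, map_nsmul,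
    nsmul_eq_mul] at h
  push_cast at h ⊢
  linarith [h]

lemma coeff0_descP (N : ℕ) : (descPochhammer ℚ (N + 1)).coeff 0 = 0 := by
  rw [descPochhammer_succ_left, Polynomial.mul_coeff_zero, Polynomial.coeff_X_zero, zero_mul]

lemma key_lemma : ∀ N k : ℕ, (N ! : ℚ) * coeff N (logOneAdd ^ k)
    = (k ! : ℚ) * (descPochhammer ℚ N).coeff k := by
  intro N
  induction N with
  | zero =>
    intro k
    rcases k with _ | k
    · simp
    · rw [coeff_zero_eq_constantCoeff, map_pow]
      have : constantCoeff logOneAdd = 0 := by simp [logOneAdd]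
      rw [this, zero_pow (Nat.succ_ne_zero k)]
      simp [Polynomial.coeff_one]
  | succ N ih =>
    intro k
    rcases k with _ | m
    · rw [pow_zero, coeff0_descP, PowerSeries.coeff_one]
      simp
    · have hrec := rec_pow N m
      have h1 := ih m
      have h2 := ih (m + 1)
      rw [descPochhammer_succ_right, mul_sub, Polynomial.coeff_sub,
        Polynomial.coeff_mul_X, ← Polynomial.C_eq_natCast, Polynomial.coeff_mul_C]
      rw [Nat.factorial_succ N, Nat.factorial_succ m]
      push_cast
      push_cast [Nat.factorial_succ m] at h2
      linear_combination (N ! : ℚ) * hrec + ((m : ℚ) + 1) * h1 - (N : ℚ) * h2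


/-- For `n ≥ 0` and `k ≥ 1`, if the higher-order Daehee numbers `D_n^{(k)}` are defined by
`(log(1+t)/t)^k = ∑ D_n^{(k)} t^n/n!` (equivalently `log(1+t)^k = t^k · ∑ D_n^{(k)} t^n/n!`),
and `s(N,m)` are the signed Stirling numbers of the first kind, defined by
`(x)_N = ∑_m s(N,m) x^m`, then `D_n^{(k)} = s(n+k,k) / C(n+k,k)`. -/
theorem daehee_higher_order_eq_stirling_div_choose
    (k : ℕ) (hk : 1 ≤ k) (D : ℕ → ℚ) (s : ℕ → ℕ → ℚ)
    (hD : ∀ n : ℕ, PowerSeries.coeff (n + k) (logOneAdd ^ k) = D n / (n ! : ℚ))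
    (hs : ∀ N : ℕ, descPochhammer ℚ N =
      ∑ m ∈ Finset.range (N + 1), Polynomial.C (s N m) * Polynomial.X ^ m) :
    ∀ n : ℕ, D n = s (n + k) k / ((n + k).choose k : ℚ) := by
  intro n
  have hkey := key_lemma (n + k) k
  rw [hD n] at hkey
  have hsk : (descPochhammer ℚ (n + k)).coeff k = s (n + k) k := by
    rw [hs (n + k), Polynomial.finset_sum_coeff]
    simp only [Polynomial.coeff_C_mul, Polynomial.coeff_X_pow, mul_ite, mul_one, mul_zero]
    rw [Finset.sum_ite_eq (Finset.range (n + k + 1)) k (s (n + k))]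
    simp [Nat.lt_succ_of_le (Nat.le_add_left k n)]
  rw [hsk] at hkey
  have hchoose : ((n + k).choose k : ℚ) * (k ! * n !) = ((n + k)! : ℚ) := by
    have := Nat.choose_mul_factorial_mul_factorial (Nat.le_add_left k n)
    push_cast [← this, Nat.add_sub_cancel]
    ring
  have hn : (n ! : ℚ) ≠ 0 := by positivity
  have hnk : ((n + k)! : ℚ) ≠ 0 := by positivity
  have hc : ((n + k).choose k : ℚ) ≠ 0 := by
    exact_mod_cast Nat.cast_ne_zero.mpr (Nat.choose_pos (Nat.le_add_left k n)).ne'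
  field_simp at hkey
  rw [eq_div_iff hc]
  have hkn : (k ! : ℚ) * n ! ≠ 0 := by positivity
  apply mul_left_cancel₀ hkn
  linear_combination (D n) * hchoose + hkey
end

section
/- For all nonnegative integers n and integers k, the higher-order Daehee polynomials satisfy D_n^{(k)}(x) = ∑_{ℓ=0}^n s(n,ℓ) B_ℓ^{(k)}(x), where s(n,ℓ) are signed Stirling numbers of the first kind and B_ℓ^{(k)}(x) are the Bernoulli polynomials of order k. -/
open Nat

/-- `log(1+t)` as a formal power series with coefficients in `ℚ[x]`. -/
noncomputable def logOneAddP : PowerSeries (Polynomial ℚ) :=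
  PowerSeries.mk fun n => if n = 0 then 0 else Polynomial.C ((-1 : ℚ) ^ (n + 1) / n)

/-- `(1+t)^x = ∑_n (x)_n t^n / n!` as a formal power series with coefficients in `ℚ[x]`. -/
noncomputable def onePlusTPowX : PowerSeries (Polynomial ℚ) :=
  PowerSeries.mk fun n => Polynomial.C ((n ! : ℚ)⁻¹) * descPochhammer ℚ n

/-- `e^t = ∑_n t^n / n!` as a formal power series with coefficients in `ℚ[x]`. -/
noncomputable def expT : PowerSeries (Polynomial ℚ) :=
  PowerSeries.mk fun n => Polynomial.C ((n ! : ℚ)⁻¹)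

/-- `e^{xt} = ∑_n x^n t^n / n!` as a formal power series with coefficients in `ℚ[x]`. -/
noncomputable def expXT : PowerSeries (Polynomial ℚ) :=
  PowerSeries.mk fun n => Polynomial.C ((n ! : ℚ)⁻¹) * Polynomial.X ^ n

namespace DaeheeAux

open PowerSeries

local notation "R" => Polynomial ℚ

/-- coefficient of `t^n` in `(log(1+t))^ℓ`. -/
noncomputable def aL (n ℓ : ℕ) : Polynomial ℚ := PowerSeries.coeff n (logOneAddP ^ ℓ)

lemma constantCoeff_logOneAddP : constantCoeff logOneAddP = 0 := by
  simp [logOneAddP, ← coeff_zero_eq_constantCoeff]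

lemma aL_eq_zero {n ℓ : ℕ} (h : n < ℓ) : aL n ℓ = 0 := by
  have hdvd : (X : R⟦X⟧) ^ ℓ ∣ logOneAddP ^ ℓ :=
    pow_dvd_pow_of_dvd (X_dvd_iff.mpr constantCoeff_logOneAddP) ℓ
  exact X_pow_dvd_iff.mp hdvd n h

/-- the substitution `f(t) ↦ f(log(1+t))`, coefficientwise. -/
noncomputable def phiFun (f : R⟦X⟧) : R⟦X⟧ :=
  PowerSeries.mk fun n => ∑ ℓ ∈ Finset.range (n + 1), coeff ℓ f * aL n ℓ

lemma coeff_phiFun (f : R⟦X⟧) (n : ℕ) :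
    coeff n (phiFun f) = ∑ ℓ ∈ Finset.range (n + 1), coeff ℓ f * aL n ℓ := by
  simp [phiFun]

/-- auxiliary truncated sum -/
noncomputable def S (f : R⟦X⟧) (N : ℕ) : R⟦X⟧ :=
  ∑ i ∈ Finset.range N, PowerSeries.C (coeff i f) * logOneAddP ^ i

lemma coeff_S (f : R⟦X⟧) {N p : ℕ} (hp : p < N) :
    coeff p (S f N) = coeff p (phiFun f) := by
  rw [coeff_phiFun, S, map_sum]
  rw [Finset.sum_subset (Finset.range_subset_range.mpr hp)]
  · apply Finset.sum_congr rfl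
    intro i _
    rw [coeff_C_mul, aL]
  · intro i hi hi'
    have : p < i := by
      simp only [Finset.mem_range] at hi hi'
      omega
    rw [aL_eq_zero this, mul_zero]

lemma phiFun_mul (f g : R⟦X⟧) : phiFun (f * g) = phiFun f * phiFun g := by
  ext n : 1
  -- RHS
  have hrhs : coeff n (phiFun f * phiFun g) = coeff n (S f (n+1) * S g (n+1)) := by
    rw [coeff_mul, coeff_mul]
    apply Finset.sum_congr rfl
    intro p hp
    rw [Finset.HasAntidiagonal.mem_antidiagonal] at hp
    rw [coeff_S f (by omega), coeff_S g (by omega)]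
  rw [hrhs]
  have hSS : S f (n+1) * S g (n+1) =
      ∑ i ∈ Finset.range (n+1), ∑ j ∈ Finset.range (n+1),
        PowerSeries.C (coeff i f * coeff j g) * logOneAddP ^ (i + j) := by
    rw [S, S, Finset.sum_mul_sum]
    apply Finset.sum_congr rfl; intro i _
    apply Finset.sum_congr rfl; intro j _
    rw [map_mul, pow_add]; ring
  rw [hSS, map_sum]
  simp_rw [map_sum, coeff_C_mul]
  -- LHS
  rw [coeff_phiFun]
  simp_rw [coeff_mul, Finset.sum_mul]
  -- now both are sums of F (i,j) = f_i * g_j * aL n (i+j)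
  rw [← Finset.sum_product']
  have hdisj : (↑(Finset.range (n+1)) : Set ℕ).PairwiseDisjoint
      (fun ℓ => (Finset.HasAntidiagonal.antidiagonal ℓ : Finset (ℕ × ℕ))) := by
    intro x _ y _ hxy
    simp only [Finset.disjoint_left]
    intro p hp hq
    rw [Finset.HasAntidiagonal.mem_antidiagonal] at hp hq
    exact hxy (hp ▸ hq.symm).symm
  have hcg : ∀ x ∈ Finset.range (n+1),
      (∑ p ∈ Finset.HasAntidiagonal.antidiagonal x, coeff p.1 f * coeff p.2 g * aL n x)
      = ∑ p ∈ Finset.HasAntidiagonal.antidiagonal x,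
          coeff p.1 f * coeff p.2 g * coeff n (logOneAddP ^ (p.1 + p.2)) := by
    intro x _
    apply Finset.sum_congr rfl
    intro p hp
    rw [Finset.HasAntidiagonal.mem_antidiagonal] at hp
    rw [aL, hp]
  rw [Finset.sum_congr rfl hcg, ← Finset.sum_biUnion hdisj]
  apply Finset.sum_subset
  · intro p hp
    simp only [Finset.mem_biUnion, Finset.mem_range, Finset.HasAntidiagonal.mem_antidiagonal] at hp
    obtain ⟨ℓ, hℓ, hpℓ⟩ := hp
    simp only [Finset.mem_product, Finset.mem_range]
    omega
  · intro p _ hp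
    simp only [Finset.mem_biUnion, Finset.mem_range, Finset.HasAntidiagonal.mem_antidiagonal] at hp
    have hlt : n < p.1 + p.2 := by
      by_contra h
      exact hp ⟨p.1 + p.2, by omega, rfl⟩
    rw [show coeff n (logOneAddP ^ (p.1 + p.2)) = 0 from aL_eq_zero hlt, mul_zero]

/-- the substitution ring hom. -/
noncomputable def phi : R⟦X⟧ →+* R⟦X⟧ where
  toFun := phiFun
  map_one' := by
    ext n
    rw [coeff_phiFun]
    rw [Finset.sum_eq_single 0]
    · simp [aL]
    · intro i _ hi
      rw [coeff_one, if_neg hi, zero_mul]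
    · simp
  map_mul' := phiFun_mul
  map_zero' := by ext n; simp [coeff_phiFun]
  map_add' f g := by
    ext n
    simp [coeff_phiFun, add_mul, Finset.sum_add_distrib]

lemma coeff_phi (f : R⟦X⟧) (n : ℕ) :
    coeff n (phi f) = ∑ ℓ ∈ Finset.range (n + 1), coeff ℓ f * aL n ℓ :=
  coeff_phiFun f n

lemma phi_X : phi X = logOneAddP := by
  ext n
  rw [coeff_phi]
  rcases n with _ | n
  · simp [coeff_X, logOneAddP]
  · rw [Finset.sum_eq_single 1]
    · simp [coeff_X, aL]
    · intro i _ hi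
      rw [coeff_X, if_neg hi, zero_mul]
    · intro h
      simp only [Finset.mem_range] at h
      omega


lemma coeff_derivativeFun' (f : R⟦X⟧) (n : ℕ) :
    coeff n (derivativeFun f) = coeff (n + 1) f * (n + 1) :=
  coeff_derivative f n

lemma coeff_dL (n : ℕ) :
    coeff n (derivativeFun logOneAddP) = Polynomial.C ((-1 : ℚ) ^ n) := by
  rw [coeff_derivativeFun', logOneAddP, coeff_mk, if_neg (Nat.succ_ne_zero n)]
  have h1 : ((n : Polynomial ℚ) + 1) = Polynomial.C ((n : ℚ) + 1) := by
    rw [map_add, map_one, Polynomial.C_eq_natCast]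
  rw [h1, ← map_mul]
  congr 1
  have h2 : ((n : ℚ) + 1) ≠ 0 := by positivity
  field_simp
  push_cast
  ring

lemma one_add_X_mul_dL : (1 + X) * derivativeFun logOneAddP = 1 := by
  ext n : 1
  rw [add_mul, one_mul, map_add, coeff_dL, coeff_one]
  rcases n with _ | n
  · have h0 : coeff 0 (X * derivativeFun logOneAddP) = 0 := by
      rw [coeff_zero_eq_constantCoeff, map_mul, constantCoeff_X, zero_mul]
    rw [h0]
    norm_num
  · rw [coeff_succ_X_mul, coeff_dL, if_neg (Nat.succ_ne_zero n), ← map_add]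
    norm_num [pow_succ]

lemma dL_pow (ℓ : ℕ) : derivativeFun (logOneAddP ^ (ℓ + 1))
    = ((ℓ + 1 : ℕ) : R⟦X⟧) * (logOneAddP ^ ℓ * derivativeFun logOneAddP) := by
  induction ℓ with
  | zero => simp [derivativeFun_mul]
  | succ m ih =>
    rw [pow_succ, derivativeFun_mul, smul_eq_mul, smul_eq_mul, ih]
    push_cast
    ring

lemma key_rec (n ℓ : ℕ) :
    ((n : Polynomial ℚ) + 1) * aL (n + 1) (ℓ + 1) + (n : Polynomial ℚ) * aL n (ℓ + 1)
      = ((ℓ : Polynomial ℚ) + 1) * aL n ℓ := by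
  have hpow : (1 + X) * derivativeFun (logOneAddP ^ (ℓ + 1))
      = ((ℓ + 1 : ℕ) : R⟦X⟧) * logOneAddP ^ ℓ := by
    rw [dL_pow, show (1 + X) * (((ℓ + 1 : ℕ) : R⟦X⟧) * (logOneAddP ^ ℓ * derivativeFun logOneAddP))
        = ((ℓ + 1 : ℕ) : R⟦X⟧) * (logOneAddP ^ ℓ * ((1 + X) * derivativeFun logOneAddP)) by ring,
      one_add_X_mul_dL, mul_one]
  have h := congrArg (coeff n) hpow
  rw [add_mul, one_mul, map_add, coeff_derivativeFun',
    ← map_natCast ((PowerSeries.C : Polynomial ℚ →+* _)) (ℓ + 1), coeff_C_mul] at h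
  have hXd : coeff n (X * derivativeFun (logOneAddP ^ (ℓ + 1)))
      = (n : Polynomial ℚ) * aL n (ℓ + 1) := by
    rcases n with _ | m
    · rw [coeff_zero_eq_constantCoeff, map_mul, constantCoeff_X, zero_mul]
      push_cast
      ring
    · rw [coeff_succ_X_mul, coeff_derivativeFun', aL]
      push_cast
      ring
  rw [hXd] at h
  have haL1 : coeff (n + 1) (logOneAddP ^ (ℓ + 1)) = aL (n + 1) (ℓ + 1) := rfl
  have haL2 : coeff n (logOneAddP ^ ℓ) = aL n ℓ := rfl
  rw [haL1, haL2] at h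
  push_cast at h ⊢
  linear_combination h

lemma stirling_rec (n ℓ : ℕ) :
    (descPochhammer ℚ (n + 1)).coeff (ℓ + 1)
      = (descPochhammer ℚ n).coeff ℓ - n * (descPochhammer ℚ n).coeff (ℓ + 1) := by
  rw [descPochhammer_succ_right, show ((n : Polynomial ℚ)) = Polynomial.C ((n : ℕ) : ℚ) by
      rw [Polynomial.C_eq_natCast],
    mul_sub, Polynomial.coeff_sub, Polynomial.coeff_mul_X, Polynomial.coeff_mul_C]
  ring

lemma aL_eq (n : ℕ) : ∀ ℓ : ℕ,
    aL n ℓ = Polynomial.C ((ℓ ! : ℚ) * (descPochhammer ℚ n).coeff ℓ / n !) := by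
  induction n with
  | zero =>
    intro ℓ
    have h0 : aL 0 ℓ = (0 : Polynomial ℚ) ^ ℓ := by
      rw [aL, coeff_zero_eq_constantCoeff, map_pow, constantCoeff_logOneAddP]
    rcases ℓ with _ | ℓ
    · simp [h0, descPochhammer_zero]
    · rw [h0, zero_pow (Nat.succ_ne_zero ℓ), descPochhammer_zero]
      rw [Polynomial.coeff_one, if_neg (Nat.succ_ne_zero ℓ)]
      simp
  | succ n ih =>
    intro ℓ
    rcases ℓ with _ | ℓ
    · have h1 : aL (n + 1) 0 = 0 := by
        rw [aL, pow_zero, coeff_one, if_neg (Nat.succ_ne_zero n)]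
      rw [h1, Polynomial.coeff_zero_eq_eval_zero, descPochhammer_eval_zero,
        if_neg (Nat.succ_ne_zero n)]
      simp
    · have hc : ((n : Polynomial ℚ) + 1) ≠ 0 := by
        have h2 : (((n + 1 : ℕ)) : Polynomial ℚ) ≠ 0 := Nat.cast_ne_zero.mpr (Nat.succ_ne_zero n)
        push_cast at h2
        exact h2
      apply mul_left_cancel₀ hc
      rw [show ((n : Polynomial ℚ) + 1) * aL (n + 1) (ℓ + 1)
          = ((ℓ : Polynomial ℚ) + 1) * aL n ℓ - (n : Polynomial ℚ) * aL n (ℓ + 1) by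
        rw [← key_rec n ℓ]; ring]
      rw [ih ℓ, ih (ℓ + 1), stirling_rec]
      rw [show ((n : Polynomial ℚ)) = Polynomial.C ((n : ℕ) : ℚ) from (Polynomial.C_eq_natCast _).symm,
        show ((ℓ : Polynomial ℚ)) = Polynomial.C ((ℓ : ℕ) : ℚ) from (Polynomial.C_eq_natCast _).symm,
        show (1 : Polynomial ℚ) = Polynomial.C (1 : ℚ) from (map_one _).symm,
        ← map_add, ← map_add, ← map_mul, ← map_mul, ← map_sub, ← map_mul]
      congr 1
      have hn : ((n ! : ℚ)) ≠ 0 := by exact_mod_cast Nat.factorial_ne_zero n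
      rw [Nat.factorial_succ n, Nat.factorial_succ ℓ]
      push_cast
      field_simp

lemma descPochhammer_one_eval_one (n : ℕ) : (descPochhammer ℚ (n + 2)).eval 1 = 0 := by
  induction n with
  | zero =>
    rw [descPochhammer_succ_eval]
    norm_num
  | succ m ih =>
    rw [descPochhammer_succ_eval, ih, zero_mul]

lemma sum_coeff_eq_eval_one (n : ℕ) :
    ∑ ℓ ∈ Finset.range (n + 1), (descPochhammer ℚ n).coeff ℓ = (descPochhammer ℚ n).eval 1 := by
  rw [Polynomial.eval_eq_sum_range' (n := n + 1) (by rw [descPochhammer_natDegree]; omega)]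
  simp

lemma phi_expT : phi expT = 1 + X := by
  ext n : 1
  rw [coeff_phi]
  have hterm : ∀ ℓ ∈ Finset.range (n + 1), coeff ℓ expT * aL n ℓ
      = Polynomial.C ((descPochhammer ℚ n).coeff ℓ / n !) := by
    intro ℓ _
    rw [expT, coeff_mk, aL_eq, ← map_mul]
    congr 1
    have hℓ : ((ℓ ! : ℚ)) ≠ 0 := by exact_mod_cast Nat.factorial_ne_zero ℓ
    field_simp
  rw [Finset.sum_congr rfl hterm, ← map_sum, ← Finset.sum_div, sum_coeff_eq_eval_one]
  rw [map_add, coeff_one]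
  rcases n with _ | n
  · simp [descPochhammer_zero, coeff_X]
  · rcases n with _ | n
    · rw [coeff_X, if_pos rfl, descPochhammer_one]
      norm_num
    · rw [coeff_X, if_neg (by omega), descPochhammer_one_eval_one, if_neg (by omega)]
      simp

lemma phi_expXT : phi expXT = onePlusTPowX := by
  ext n : 1
  rw [coeff_phi, onePlusTPowX, coeff_mk]
  have hterm : ∀ ℓ ∈ Finset.range (n + 1), coeff ℓ expXT * aL n ℓ
      = Polynomial.C ((n ! : ℚ)⁻¹) *
        (Polynomial.C ((descPochhammer ℚ n).coeff ℓ) * Polynomial.X ^ ℓ) := by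
    intro ℓ _
    rw [expXT, coeff_mk, aL_eq]
    have hℓ : ((ℓ ! : ℚ)) ≠ 0 := by exact_mod_cast Nat.factorial_ne_zero ℓ
    rw [show Polynomial.C ((ℓ ! : ℚ)⁻¹) * Polynomial.X ^ ℓ *
        Polynomial.C ((ℓ ! : ℚ) * (descPochhammer ℚ n).coeff ℓ / n !)
        = Polynomial.C ((ℓ ! : ℚ)⁻¹ * ((ℓ ! : ℚ) * (descPochhammer ℚ n).coeff ℓ / n !)) *
          Polynomial.X ^ ℓ by rw [map_mul]; ring]
    rw [show (ℓ ! : ℚ)⁻¹ * ((ℓ ! : ℚ) * (descPochhammer ℚ n).coeff ℓ / n !)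
        = (n ! : ℚ)⁻¹ * (descPochhammer ℚ n).coeff ℓ by field_simp; try ring]
    rw [map_mul]
    ring
  rw [Finset.sum_congr rfl hterm, ← Finset.mul_sum]
  congr 1
  conv_rhs => rw [Polynomial.as_sum_range' (descPochhammer ℚ n) (n + 1)
    (by rw [descPochhammer_natDegree]; omega)]
  apply Finset.sum_congr rfl
  intro i _
  rw [Polynomial.C_mul_X_pow_eq_monomial]

end DaeheeAux

/-- For `n ≥ 0` and `k ∈ ℤ`: if `u = log(1+t)/t` and `v = t/(e^t-1)` (as units of the ring
of power series over `ℚ[x]`), the higher-order Daehee polynomials are defined by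
`(log(1+t)/t)^k (1+t)^x = ∑ D_n^{(k)}(x) t^n/n!`, the Bernoulli polynomials of order `k`
by `(t/(e^t-1))^k e^{xt} = ∑ B_n^{(k)}(x) t^n/n!`, and `s(N,ℓ)` are the signed Stirling
numbers of the first kind (`(x)_N = ∑_ℓ s(N,ℓ) x^ℓ`), then
`D_n^{(k)}(x) = ∑_{ℓ=0}^n s(n,ℓ) B_ℓ^{(k)}(x)`. -/
theorem daehee_poly_eq_stirling_sum_bernoulli_poly
    (k : ℤ) (D B : ℕ → Polynomial ℚ) (s : ℕ → ℕ → ℚ)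
    (u v : (PowerSeries (Polynomial ℚ))ˣ)
    (hu : PowerSeries.X * (u : PowerSeries (Polynomial ℚ)) = logOneAddP)
    (hv : (v : PowerSeries (Polynomial ℚ)) * (expT - 1) = PowerSeries.X)
    (hD : ∀ n : ℕ, PowerSeries.coeff n
        (((u ^ k : (PowerSeries (Polynomial ℚ))ˣ) : PowerSeries (Polynomial ℚ)) * onePlusTPowX)
        = Polynomial.C ((n ! : ℚ)⁻¹) * D n)
    (hB : ∀ n : ℕ, PowerSeries.coeff n
        (((v ^ k : (PowerSeries (Polynomial ℚ))ˣ) : PowerSeries (Polynomial ℚ)) * expXT)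
        = Polynomial.C ((n ! : ℚ)⁻¹) * B n)
    (hs : ∀ N : ℕ, descPochhammer ℚ N =
      ∑ m ∈ Finset.range (N + 1), Polynomial.C (s N m) * Polynomial.X ^ m) :
    ∀ n : ℕ, D n = ∑ ℓ ∈ Finset.range (n + 1), Polynomial.C (s n ℓ) * B ℓ := by
  intro n
  classical
  have hφv : DaeheeAux.phi (↑v : PowerSeries (Polynomial ℚ)) = ↑u := by
    have h1 := congrArg DaeheeAux.phi hv
    rw [map_mul, map_sub, map_one, DaeheeAux.phi_expT, DaeheeAux.phi_X,
      show (1 : PowerSeries (Polynomial ℚ)) + PowerSeries.X - 1 = PowerSeries.X by ring] at h1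
    have h2 : PowerSeries.X * DaeheeAux.phi (↑v : PowerSeries (Polynomial ℚ))
        = PowerSeries.X * (↑u : PowerSeries (Polynomial ℚ)) := by
      rw [mul_comm, h1, hu]
    exact mul_left_cancel₀ PowerSeries.X_ne_zero h2
  have hUnit : DaeheeAux.phi ((↑(v ^ k) : PowerSeries (Polynomial ℚ))) = (↑(u ^ k) : PowerSeries (Polynomial ℚ)) := by
    have hm : Units.map (DaeheeAux.phi.toMonoidHom) v = u := Units.ext hφv
    calc DaeheeAux.phi (↑(v ^ k) : PowerSeries (Polynomial ℚ))
        = ↑(Units.map DaeheeAux.phi.toMonoidHom (v ^ k)) := by rw [Units.coe_map]; rfl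
      _ = ↑((Units.map DaeheeAux.phi.toMonoidHom v) ^ k) := by rw [map_zpow]
      _ = ↑(u ^ k) := by rw [hm]
  have hsℓ : ∀ ℓ : ℕ, ℓ < n + 1 → (descPochhammer ℚ n).coeff ℓ = s n ℓ := by
    intro ℓ hℓ
    have h := congrArg (fun p => Polynomial.coeff p ℓ) (hs n)
    simp only [Polynomial.finset_sum_coeff, Polynomial.coeff_C_mul,
      Polynomial.coeff_X_pow] at h
    rw [Finset.sum_eq_single ℓ (fun m _ hm => by rw [if_neg (Ne.symm hm), mul_zero])
      (fun hcon => absurd (Finset.mem_range.mpr hℓ) hcon), if_pos rfl, mul_one] at h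
    exact h
  have hmain : Polynomial.C ((n ! : ℚ)⁻¹) * D n
      = Polynomial.C ((n ! : ℚ)⁻¹) *
        ∑ ℓ ∈ Finset.range (n + 1), Polynomial.C (s n ℓ) * B ℓ := by
    rw [← hD n,
      show (↑(u ^ k) : PowerSeries (Polynomial ℚ)) * onePlusTPowX
        = DaeheeAux.phi ((↑(v ^ k) : PowerSeries (Polynomial ℚ)) * expXT) by
          rw [map_mul, hUnit, DaeheeAux.phi_expXT],
      DaeheeAux.coeff_phi, Finset.mul_sum]
    apply Finset.sum_congr rfl
    intro ℓ hℓ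
    rw [Finset.mem_range] at hℓ
    rw [hB ℓ, DaeheeAux.aL_eq, ← hsℓ ℓ hℓ]
    have hfℓ : ((ℓ ! : ℚ)) ≠ 0 := by exact_mod_cast Nat.factorial_ne_zero ℓ
    rw [show Polynomial.C ((ℓ ! : ℚ)⁻¹) * B ℓ *
        Polynomial.C ((ℓ ! : ℚ) * (descPochhammer ℚ n).coeff ℓ / n !)
        = Polynomial.C ((ℓ ! : ℚ)⁻¹ * ((ℓ ! : ℚ) * (descPochhammer ℚ n).coeff ℓ / n !)) * B ℓ by
          rw [map_mul]; ring,
      show (ℓ ! : ℚ)⁻¹ * ((ℓ ! : ℚ) * (descPochhammer ℚ n).coeff ℓ / n !)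
        = (n ! : ℚ)⁻¹ * (descPochhammer ℚ n).coeff ℓ by field_simp; try ring,
      map_mul]
    ring
  have hCne : (Polynomial.C ((n ! : ℚ)⁻¹) : Polynomial ℚ) ≠ 0 := by
    simp only [ne_eq, Polynomial.C_eq_zero, inv_eq_zero]
    exact_mod_cast Nat.factorial_ne_zero n
  exact mul_left_cancel₀ hCne hmain
end

section
/- For all nonnegative integers n and integers k, the Bernoulli polynomials of order k satisfy B_n^{(k)}(x) = ∑_{ℓ=0}^n S(n,ℓ) D_ℓ^{(k)}(x), where S(n,ℓ) are Stirling numbers of the second kind and D_ℓ^{(k)}(x) are the higher-order Daehee polynomials. -/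
open Nat

namespace DaeheeAux

open PowerSeries Polynomial

variable {R : Type*} [CommRing R]

/-- Substitution of `a` (with zero constant term) into `f`. -/
noncomputable def sub (a f : R⟦X⟧) : R⟦X⟧ :=
  PowerSeries.mk fun n => PowerSeries.coeff n (Polynomial.eval₂ (PowerSeries.C) a (trunc (n+1) f))

theorem coeff_pow_eq_zero {f : R⟦X⟧} (h0 : constantCoeff f = 0) {n d : ℕ} (h : n < d) :
    PowerSeries.coeff n (f ^ d) = 0 := by
  have hx : (X : R⟦X⟧) ^ d ∣ f ^ d := pow_dvd_pow_of_dvd (PowerSeries.X_dvd_iff.mpr h0) d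
  exact (PowerSeries.X_pow_dvd_iff.mp hx) n h

theorem coeff_eval₂_eq_zero {a : R⟦X⟧} (h0 : constantCoeff a = 0) {p : Polynomial R} {n : ℕ}
    (hp : ∀ d ≤ n, p.coeff d = 0) :
    PowerSeries.coeff n (Polynomial.eval₂ (PowerSeries.C) a p) = 0 := by
  obtain ⟨q, hq⟩ := (Polynomial.X_pow_dvd_iff (n := n+1)).2
    (fun d hd => hp d (Nat.lt_succ_iff.mp hd))
  rw [hq, Polynomial.eval₂_mul, Polynomial.eval₂_X_pow]
  have hx : (X : R⟦X⟧) ^ (n+1) ∣ a ^ (n+1) * Polynomial.eval₂ (PowerSeries.C) a q :=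
    dvd_mul_of_dvd_left (pow_dvd_pow_of_dvd (PowerSeries.X_dvd_iff.mpr h0) _) _
  exact (PowerSeries.X_pow_dvd_iff.mp hx) n (Nat.lt_succ_self n)

theorem coeff_eval₂_congr {a : R⟦X⟧} (h0 : constantCoeff a = 0) {p q : Polynomial R} {n : ℕ}
    (h : ∀ d ≤ n, p.coeff d = q.coeff d) :
    PowerSeries.coeff n (Polynomial.eval₂ (PowerSeries.C) a p)
      = PowerSeries.coeff n (Polynomial.eval₂ (PowerSeries.C) a q) := by
  have := coeff_eval₂_eq_zero h0 (p := p - q) (n := n) (fun d hd => by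
    simp [Polynomial.coeff_sub, h d hd])
  rw [Polynomial.eval₂_sub, map_sub, sub_eq_zero] at this
  exact this

theorem coeff_sub' {a : R⟦X⟧} (h0 : constantCoeff a = 0) (f : R⟦X⟧) {n N : ℕ} (hn : n < N) :
    PowerSeries.coeff n (sub a f)
      = PowerSeries.coeff n (Polynomial.eval₂ (PowerSeries.C) a (trunc N f)) := by
  rw [sub, coeff_mk]
  refine coeff_eval₂_congr h0 (fun d hd => ?_)
  rw [coeff_trunc, coeff_trunc, if_pos (Nat.lt_succ_of_le hd), if_pos (lt_of_le_of_lt hd hn)]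

theorem coeff_sub_eq_sum {a : R⟦X⟧} (h0 : constantCoeff a = 0) (f : R⟦X⟧) (n : ℕ) :
    PowerSeries.coeff n (sub a f)
      = ∑ d ∈ Finset.range (n+1), PowerSeries.coeff d f * PowerSeries.coeff n (a ^ d) := by
  rw [sub, coeff_mk]
  have hdeg : (trunc (n+1) f).natDegree < n + 1 := by
    have := degree_trunc_lt f (n+1)
    rcases eq_or_ne (trunc (n+1) f) 0 with h | h
    · simp [h]
    · exact (Polynomial.natDegree_lt_iff_degree_lt h).mpr this
  rw [Polynomial.eval₂_eq_sum_range' _ hdeg, map_sum]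
  refine Finset.sum_congr rfl (fun d hd => ?_)
  rw [PowerSeries.coeff_C_mul, coeff_trunc, if_pos (Finset.mem_range.mp hd)]

theorem sub_mul_eq {a : R⟦X⟧} (h0 : constantCoeff a = 0) (f g : R⟦X⟧) :
    sub a (f * g) = sub a f * sub a g := by
  ext n
  rw [coeff_sub' h0 (f * g) (Nat.lt_succ_self n)]
  have h1 : PowerSeries.coeff n (Polynomial.eval₂ (PowerSeries.C) a (trunc (n+1) (f*g)))
      = PowerSeries.coeff n (Polynomial.eval₂ (PowerSeries.C) a
          (trunc (n+1) f * trunc (n+1) g)) := by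
    refine coeff_eval₂_congr h0 (fun d hd => ?_)
    have := trunc_trunc_mul_trunc (n := n+1) f g
    have hco : ∀ (p : Polynomial R), p.coeff d = Polynomial.coeff (trunc (n+1) (p : R⟦X⟧)) d := by
      intro p
      rw [coeff_trunc, Polynomial.coeff_coe, if_pos (Nat.lt_succ_of_le hd)]
    rw [hco (trunc (n+1) f * trunc (n+1) g), Polynomial.coe_mul, this]
  rw [h1, Polynomial.eval₂_mul, PowerSeries.coeff_mul, PowerSeries.coeff_mul]
  refine Finset.sum_congr rfl (fun q hq => ?_)
  rw [Finset.HasAntidiagonal.mem_antidiagonal] at hq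
  rw [coeff_sub' h0 f (show q.1 < n+1 by omega), coeff_sub' h0 g (show q.2 < n+1 by omega)]

/-- The substitution ring homomorphism. -/
noncomputable def subHom (a : R⟦X⟧) (h0 : constantCoeff a = 0) : R⟦X⟧ →+* R⟦X⟧ where
  toFun := sub a
  map_one' := by
    ext n
    rw [coeff_sub' h0 1 (Nat.lt_succ_self n), trunc_one, Polynomial.eval₂_one]
  map_mul' := sub_mul_eq h0
  map_zero' := by
    ext n
    rw [coeff_sub' h0 0 (Nat.lt_succ_self n), map_zero, Polynomial.eval₂_zero, map_zero]
  map_add' := fun f g => by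
    ext n
    rw [coeff_sub' h0 (f+g) (Nat.lt_succ_self n), map_add, Polynomial.eval₂_add,
      map_add, map_add, coeff_sub' h0 f (Nat.lt_succ_self n), coeff_sub' h0 g (Nat.lt_succ_self n)]

theorem subHom_X {a : R⟦X⟧} (h0 : constantCoeff a = 0) : subHom a h0 X = a := by
  show sub a X = a
  ext n
  rw [coeff_sub' h0 X (show n < n + 2 by omega), trunc_X, Polynomial.eval₂_X]

theorem constantCoeff_sub {a : R⟦X⟧} (h0 : constantCoeff a = 0) (f : R⟦X⟧)
    (hf : constantCoeff f = 0) : constantCoeff (sub a f) = 0 := by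
  rw [← coeff_zero_eq_constantCoeff_apply, coeff_sub_eq_sum h0]
  simp [coeff_zero_eq_constantCoeff_apply, hf]


theorem derivative_eval₂ (a : R⟦X⟧) (p : Polynomial R) :
    d⁄dX R (Polynomial.eval₂ (PowerSeries.C) a p)
      = Polynomial.eval₂ (PowerSeries.C) a (Polynomial.derivative p) * d⁄dX R a := by
  induction p using Polynomial.induction_on' with
  | add p q hp hq =>
    rw [Polynomial.eval₂_add, map_add, hp, hq, Polynomial.derivative_add,
      Polynomial.eval₂_add, add_mul]
  | monomial d r =>
    rw [Polynomial.eval₂_monomial, Polynomial.derivative_monomial, Polynomial.eval₂_monomial]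
    rw [Derivation.leibniz, Derivation.leibniz_pow, PowerSeries.derivative_C]
    simp only [smul_zero, add_zero, smul_smul, smul_eq_mul, map_mul, map_natCast]
    cases d with
    | zero => simp
    | succ d =>
      simp only [Nat.add_sub_cancel, Nat.cast_add, Nat.cast_one]
      ring

theorem derivative_sub_eq {a : R⟦X⟧} (h0 : constantCoeff a = 0) (f : R⟦X⟧) :
    d⁄dX R (sub a f) = sub a (d⁄dX R f) * d⁄dX R a := by
  ext n
  rw [PowerSeries.coeff_derivative, coeff_sub' h0 f (show n + 1 < n + 2 by omega),
    ← PowerSeries.coeff_derivative, derivative_eval₂]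
  have ht : Polynomial.derivative (trunc (n+2) f) = trunc (n+1) (d⁄dX R f) :=
    (trunc_derivative f (n+1)).symm
  rw [ht, PowerSeries.coeff_mul, PowerSeries.coeff_mul]
  refine Finset.sum_congr rfl (fun q hq => ?_)
  rw [Finset.HasAntidiagonal.mem_antidiagonal] at hq
  rw [coeff_sub' h0 (d⁄dX R f) (show q.1 < n+1 by omega)]



noncomputable def E : (Polynomial ℚ)⟦X⟧ := expT - 1
noncomputable def E₀ : ℚ⟦X⟧ := PowerSeries.exp ℚ - 1

theorem hE0 : PowerSeries.constantCoeff E = 0 := by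
  rw [E, map_sub, ← PowerSeries.coeff_zero_eq_constantCoeff_apply,
    ← PowerSeries.coeff_zero_eq_constantCoeff_apply]
  simp [expT]

theorem hE₀0 : PowerSeries.constantCoeff E₀ = 0 := by
  simp [E₀, PowerSeries.constantCoeff_exp]

theorem DexpT : d⁄dX (Polynomial ℚ) expT = expT := by
  ext n
  rw [PowerSeries.coeff_derivative]
  simp only [expT, coeff_mk]
  have h : ((n:ℚ) + 1) ≠ 0 := by positivity
  rw [show ((n:Polynomial ℚ) + 1) = Polynomial.C ((n:ℚ)+1) by rw [map_add, map_one, Polynomial.C_eq_natCast], ← Polynomial.C_mul]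
  congr 1
  rw [factorial_succ]
  push_cast
  field_simp

theorem DE : d⁄dX (Polynomial ℚ) E = expT := by
  rw [E, map_sub, DexpT]
  rw [show (1 : (Polynomial ℚ)⟦X⟧) = PowerSeries.C 1 from (map_one _).symm,
    PowerSeries.derivative_C, sub_zero]

noncomputable def geom : (Polynomial ℚ)⟦X⟧ :=
  PowerSeries.mk fun n => Polynomial.C ((-1:ℚ)^n)

theorem hDlog : d⁄dX (Polynomial ℚ) logOneAddP = geom := by
  ext n
  rw [PowerSeries.coeff_derivative]
  simp only [logOneAddP, geom, coeff_mk, Nat.succ_ne_zero, if_false]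
  rw [show ((n:Polynomial ℚ) + 1) = Polynomial.C ((n:ℚ)+1) by
    rw [map_add, map_one, Polynomial.C_eq_natCast], ← Polynomial.C_mul]
  congr 1
  have h : ((n:ℚ) + 1) ≠ 0 := by positivity
  push_cast
  rw [pow_succ, pow_succ]
  field_simp

theorem h_geom : (1 + PowerSeries.X) * geom = (1 : (Polynomial ℚ)⟦X⟧) := by
  ext n
  rw [add_mul, one_mul, map_add]
  cases n with
  | zero =>
    rw [PowerSeries.coeff_zero_X_mul, add_zero]
    simp [geom]
  | succ n =>
    rw [PowerSeries.coeff_succ_X_mul]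
    simp only [geom, coeff_mk, PowerSeries.coeff_one, Nat.succ_ne_zero, if_false]
    rw [← map_add, pow_succ]
    ring_nf
    simp

theorem hσlog : subHom E hE0 logOneAddP = PowerSeries.X := by
  apply PowerSeries.derivative.ext
  · show d⁄dX (Polynomial ℚ) (sub E logOneAddP) = _
    rw [derivative_sub_eq hE0, PowerSeries.derivative_X, hDlog, DE]
    have h1 : (subHom E hE0) ((1 + PowerSeries.X) * geom) = 1 := by rw [h_geom, map_one]
    rw [map_mul, map_add, map_one, subHom_X hE0] at h1
    have h1E : (1 : (Polynomial ℚ)⟦X⟧) + E = expT := by rw [E]; ring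
    rw [h1E] at h1
    calc sub E geom * expT = expT * subHom E hE0 geom := mul_comm _ _
      _ = 1 := h1
  · rw [PowerSeries.constantCoeff_X]
    exact constantCoeff_sub hE0 _ (by simp [logOneAddP, ← PowerSeries.coeff_zero_eq_constantCoeff_apply])


theorem hmapexp : PowerSeries.map (Polynomial.C : ℚ →+* Polynomial ℚ) (PowerSeries.exp ℚ) = expT := by
  ext k
  rw [PowerSeries.coeff_map, PowerSeries.coeff_exp]
  simp [expT, one_div]

theorem hmapE : PowerSeries.map (Polynomial.C : ℚ →+* Polynomial ℚ) E₀ = E := by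
  rw [E₀, E, map_sub, map_one, hmapexp]

theorem coeff_E_pow (n d : ℕ) :
    PowerSeries.coeff n (E ^ d) = Polynomial.C (PowerSeries.coeff n (E₀ ^ d)) := by
  rw [← hmapE, ← map_pow, PowerSeries.coeff_map]

theorem hevalexp (m : ℚ) :
    PowerSeries.map (Polynomial.evalRingHom m) expT = PowerSeries.exp ℚ := by
  ext k
  rw [PowerSeries.coeff_map, PowerSeries.coeff_exp]
  simp [expT, one_div]

theorem heval_coeff_E_pow (m : ℚ) (n d : ℕ) :
    Polynomial.eval m (PowerSeries.coeff n (E ^ d))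
      = PowerSeries.coeff n (E₀ ^ d) := by
  rw [coeff_E_pow]
  simp

/-- the binomial computation over `ℚ` -/
theorem binom_sum (n m : ℕ) :
    ∑ d ∈ Finset.range (n+1), (m.choose d : ℚ) * PowerSeries.coeff n (E₀ ^ d)
      = (n ! : ℚ)⁻¹ * (m:ℚ) ^ n := by
  have hbin : (PowerSeries.exp ℚ) ^ m
      = ∑ d ∈ Finset.range (m+1), E₀ ^ d * ((m.choose d : ℕ) : ℚ⟦X⟧) := by
    have h1 : PowerSeries.exp ℚ = E₀ + 1 := by rw [E₀]; ring
    rw [h1, add_pow]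
    exact Finset.sum_congr rfl (fun d hd => by rw [one_pow, mul_one])
  have h1 : PowerSeries.coeff n ((PowerSeries.exp ℚ)^m) = (n ! : ℚ)⁻¹ * (m:ℚ)^n := by
    rw [PowerSeries.exp_pow_eq_rescale_exp, PowerSeries.coeff_rescale, PowerSeries.coeff_exp]
    simp [one_div, mul_comm]
  have h2 : PowerSeries.coeff n ((PowerSeries.exp ℚ)^m)
      = ∑ d ∈ Finset.range (m+1), (m.choose d : ℚ) * PowerSeries.coeff n (E₀ ^ d) := by
    rw [hbin, map_sum]
    refine Finset.sum_congr rfl (fun d hd => ?_)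
    rw [show ((m.choose d : ℕ) : ℚ⟦X⟧) = PowerSeries.C ((m.choose d : ℕ) : ℚ) by
      rw [map_natCast], PowerSeries.coeff_mul_C, mul_comm]
  set N := max n m with hN
  have key : ∀ (K : ℕ), K ≤ N →
      ∑ d ∈ Finset.range (K+1), (m.choose d : ℚ) * PowerSeries.coeff n (E₀ ^ d)
        = ∑ d ∈ Finset.range (N+1), (m.choose d : ℚ) * PowerSeries.coeff n (E₀ ^ d) → True := fun _ _ _ => trivial
  have e1 : ∑ d ∈ Finset.range (n+1), (m.choose d : ℚ) * PowerSeries.coeff n (E₀ ^ d)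
      = ∑ d ∈ Finset.range (N+1), (m.choose d : ℚ) * PowerSeries.coeff n (E₀ ^ d) := by
    refine Finset.sum_subset (by gcongr <;> omega) (fun d hd hd' => ?_)
    have : n < d := by
      simp only [Finset.mem_range] at hd hd'
      omega
    rw [coeff_pow_eq_zero hE₀0 this, mul_zero]
  have e2 : ∑ d ∈ Finset.range (m+1), (m.choose d : ℚ) * PowerSeries.coeff n (E₀ ^ d)
      = ∑ d ∈ Finset.range (N+1), (m.choose d : ℚ) * PowerSeries.coeff n (E₀ ^ d) := by
    refine Finset.sum_subset (by gcongr <;> omega) (fun d hd hd' => ?_)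
    have : m < d := by
      simp only [Finset.mem_range] at hd hd'
      omega
    rw [Nat.choose_eq_zero_of_lt this]
    simp
  rw [e1, ← e2, ← h2, h1]

theorem poly_eq_of_nat_eval {p q : Polynomial ℚ} (h : ∀ m : ℕ, p.eval (m:ℚ) = q.eval (m:ℚ)) :
    p = q := by
  rw [← sub_eq_zero]
  apply Polynomial.eq_zero_of_infinite_isRoot
  apply Set.Infinite.mono (s := Set.range ((↑) : ℕ → ℚ))
  · rintro x ⟨m, rfl⟩
    simp [Polynomial.IsRoot, h m]
  · exact Set.infinite_range_of_injective Nat.cast_injective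

theorem hσP : subHom E hE0 onePlusTPowX = expXT := by
  refine PowerSeries.ext fun n => ?_
  show PowerSeries.coeff n (sub E onePlusTPowX) = _
  rw [coeff_sub_eq_sum hE0]
  simp only [onePlusTPowX, expXT, PowerSeries.coeff_mk]
  apply poly_eq_of_nat_eval
  intro m
  rw [Polynomial.eval_finset_sum]
  have hterm : ∀ d ∈ Finset.range (n+1),
      Polynomial.eval (m:ℚ) (Polynomial.C ((d ! : ℚ)⁻¹) * descPochhammer ℚ d
          * PowerSeries.coeff n (E ^ d))
        = (m.choose d : ℚ) * PowerSeries.coeff n (E₀ ^ d) := by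
    intro d _
    rw [Polynomial.eval_mul, Polynomial.eval_mul, Polynomial.eval_C,
      descPochhammer_eval_eq_descFactorial, heval_coeff_E_pow]
    congr 1
    rw [Nat.descFactorial_eq_factorial_mul_choose]
    push_cast
    have hd : (d ! : ℚ) ≠ 0 := Nat.cast_ne_zero.mpr d.factorial_ne_zero
    field_simp
  rw [Finset.sum_congr rfl hterm, binom_sum]
  rw [Polynomial.eval_mul, Polynomial.eval_C, Polynomial.eval_pow, Polynomial.eval_X]


theorem descPoch_li : ∀ (N : ℕ) (c : ℕ → ℚ),
    (∑ d ∈ Finset.range N, Polynomial.C (c d) * descPochhammer ℚ d) = 0 → ∀ d < N, c d = 0 := by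
  intro N
  induction N with
  | zero => intro c _ d hd; omega
  | succ N ih =>
    intro c h
    have htop : c N = 0 := by
      have hc := congrArg (fun p => Polynomial.coeff p N) h
      simp only [Polynomial.finset_sum_coeff, Polynomial.coeff_zero] at hc
      rw [Finset.sum_range_succ] at hc
      have hz : ∀ d ∈ Finset.range N, (Polynomial.C (c d) * descPochhammer ℚ d).coeff N = 0 := by
        intro d hd
        rw [Polynomial.coeff_C_mul, Polynomial.coeff_eq_zero_of_natDegree_lt, mul_zero]
        rw [descPochhammer_natDegree]
        exact Finset.mem_range.mp hd
      rw [Finset.sum_eq_zero hz, zero_add, Polynomial.coeff_C_mul] at hc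
      have hm : (descPochhammer ℚ N).coeff N = 1 := by
        have := (monic_descPochhammer ℚ N).coeff_natDegree
        rwa [descPochhammer_natDegree] at this
      rwa [hm, mul_one] at hc
    rw [Finset.sum_range_succ, htop, map_zero, zero_mul, add_zero] at h
    intro d hd
    rcases Nat.lt_succ_iff_lt_or_eq.mp hd with h' | h'
    · exact ih c h d h'
    · rw [h']; exact htop

theorem descPoch_eq_coeffs {N : ℕ} {a b : ℕ → ℚ}
    (h : ∑ d ∈ Finset.range N, Polynomial.C (a d) * descPochhammer ℚ d
       = ∑ d ∈ Finset.range N, Polynomial.C (b d) * descPochhammer ℚ d) :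
    ∀ d < N, a d = b d := by
  intro d hd
  have h0 : ∑ d ∈ Finset.range N, Polynomial.C (a d - b d) * descPochhammer ℚ d = 0 := by
    rw [← sub_eq_zero] at h
    rw [← h, ← Finset.sum_sub_distrib]
    refine Finset.sum_congr rfl (fun i _ => ?_)
    rw [map_sub, sub_mul]
  have := descPoch_li N _ h0 d hd
  linarith

end DaeheeAux

/-- For `n ≥ 0` and `k ∈ ℤ`: if `u = log(1+t)/t` and `v = t/(e^t-1)` (as units of the ring
of power series over `ℚ[x]`), the higher-order Daehee polynomials are defined by
`(log(1+t)/t)^k (1+t)^x = ∑ D_n^{(k)}(x) t^n/n!`, the Bernoulli polynomials of order `k`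
by `(t/(e^t-1))^k e^{xt} = ∑ B_n^{(k)}(x) t^n/n!`, and `s(N,ℓ)` are the signed Stirling
numbers `S(N,ℓ)` of the second kind satisfy `x^N = ∑_ℓ S(N,ℓ) (x)_ℓ`, then
`B_n^{(k)}(x) = ∑_{ℓ=0}^n S(n,ℓ) D_ℓ^{(k)}(x)`. -/
theorem bernoulli_poly_eq_stirling2_sum_daehee_poly
    (k : ℤ) (D B : ℕ → Polynomial ℚ) (S : ℕ → ℕ → ℚ)
    (u v : (PowerSeries (Polynomial ℚ))ˣ)
    (hu : PowerSeries.X * (u : PowerSeries (Polynomial ℚ)) = logOneAddP)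
    (hv : (v : PowerSeries (Polynomial ℚ)) * (expT - 1) = PowerSeries.X)
    (hD : ∀ n : ℕ, PowerSeries.coeff n
        (((u ^ k : (PowerSeries (Polynomial ℚ))ˣ) : PowerSeries (Polynomial ℚ)) * onePlusTPowX)
        = Polynomial.C ((n ! : ℚ)⁻¹) * D n)
    (hB : ∀ n : ℕ, PowerSeries.coeff n
        (((v ^ k : (PowerSeries (Polynomial ℚ))ˣ) : PowerSeries (Polynomial ℚ)) * expXT)
        = Polynomial.C ((n ! : ℚ)⁻¹) * B n)
    (hS : ∀ N : ℕ, (Polynomial.X : Polynomial ℚ) ^ N =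
      ∑ ℓ ∈ Finset.range (N + 1), Polynomial.C (S N ℓ) * descPochhammer ℚ ℓ) :
    ∀ n : ℕ, B n = ∑ ℓ ∈ Finset.range (n + 1), Polynomial.C (S n ℓ) * D ℓ := by
  intro n
  open DaeheeAux in
  set σ : PowerSeries (Polynomial ℚ) →+* PowerSeries (Polynomial ℚ) :=
    DaeheeAux.subHom DaeheeAux.E DaeheeAux.hE0 with hσdef
  have hEne : (DaeheeAux.E : PowerSeries (Polynomial ℚ)) ≠ 0 := by
    intro h
    have h1 := congrArg (PowerSeries.coeff 1) h
    rw [DaeheeAux.E, map_sub, map_zero] at h1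
    simp [expT, PowerSeries.coeff_one] at h1
  have h1 : DaeheeAux.E * (σ (u : PowerSeries (Polynomial ℚ))) = PowerSeries.X := by
    have h := congrArg σ hu
    rwa [map_mul, DaeheeAux.subHom_X DaeheeAux.hE0, DaeheeAux.hσlog] at h
  have h2 : DaeheeAux.E * (v : PowerSeries (Polynomial ℚ)) = PowerSeries.X := by
    rw [mul_comm]; exact hv
  have hσu : σ (u : PowerSeries (Polynomial ℚ)) = (v : PowerSeries (Polynomial ℚ)) :=
    mul_left_cancel₀ hEne (h1.trans h2.symm)
  have hUv : Units.map σ.toMonoidHom u = v := Units.ext (by simpa using hσu)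
  have hσuk : σ ((u ^ k : (PowerSeries (Polynomial ℚ))ˣ) : PowerSeries (Polynomial ℚ))
      = ((v ^ k : (PowerSeries (Polynomial ℚ))ˣ) : PowerSeries (Polynomial ℚ)) := by
    calc σ ((u ^ k : (PowerSeries (Polynomial ℚ))ˣ) : PowerSeries (Polynomial ℚ))
        = ((Units.map σ.toMonoidHom (u ^ k) : (PowerSeries (Polynomial ℚ))ˣ) :
            PowerSeries (Polynomial ℚ)) := rfl
      _ = (((Units.map σ.toMonoidHom u) ^ k : (PowerSeries (Polynomial ℚ))ˣ) :
            PowerSeries (Polynomial ℚ)) := by rw [map_zpow]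
      _ = _ := by rw [hUv]
  have hmain : σ (((u ^ k : (PowerSeries (Polynomial ℚ))ˣ) : PowerSeries (Polynomial ℚ))
        * onePlusTPowX)
      = ((v ^ k : (PowerSeries (Polynomial ℚ))ˣ) : PowerSeries (Polynomial ℚ)) * expXT := by
    rw [map_mul, hσuk, hσdef, DaeheeAux.hσP]
  -- Stirling identification
  have hγ : ∀ ℓ, ℓ < n + 1 →
      (ℓ ! : ℚ)⁻¹ * PowerSeries.coeff n (DaeheeAux.E₀ ^ ℓ) = (n ! : ℚ)⁻¹ * S n ℓ := by
    have h := congrArg (PowerSeries.coeff n) (DaeheeAux.hσP)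
    rw [show (DaeheeAux.subHom DaeheeAux.E DaeheeAux.hE0) onePlusTPowX
        = DaeheeAux.sub DaeheeAux.E onePlusTPowX from rfl,
      DaeheeAux.coeff_sub_eq_sum DaeheeAux.hE0] at h
    simp only [onePlusTPowX, expXT, PowerSeries.coeff_mk] at h
    rw [hS n, Finset.mul_sum] at h
    have hL : ∀ ℓ ∈ Finset.range (n+1),
        Polynomial.C ((ℓ ! : ℚ)⁻¹) * descPochhammer ℚ ℓ
            * PowerSeries.coeff n (DaeheeAux.E ^ ℓ)
          = Polynomial.C ((ℓ ! : ℚ)⁻¹ * PowerSeries.coeff n (DaeheeAux.E₀ ^ ℓ))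
            * descPochhammer ℚ ℓ := by
      intro ℓ _
      rw [DaeheeAux.coeff_E_pow, map_mul]
      ring
    have hR : ∀ ℓ ∈ Finset.range (n+1),
        Polynomial.C ((n ! : ℚ)⁻¹) * (Polynomial.C (S n ℓ) * descPochhammer ℚ ℓ)
          = Polynomial.C ((n ! : ℚ)⁻¹ * S n ℓ) * descPochhammer ℚ ℓ := by
      intro ℓ _
      rw [map_mul]; ring
    rw [Finset.sum_congr rfl hL, Finset.sum_congr rfl hR] at h
    exact DaeheeAux.descPoch_eq_coeffs h
  -- final computation
  have hc := congrArg (PowerSeries.coeff n) hmain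
  rw [show σ (((u ^ k : (PowerSeries (Polynomial ℚ))ˣ) : PowerSeries (Polynomial ℚ))
        * onePlusTPowX)
      = DaeheeAux.sub DaeheeAux.E (((u ^ k : (PowerSeries (Polynomial ℚ))ˣ) :
          PowerSeries (Polynomial ℚ)) * onePlusTPowX) from rfl,
    DaeheeAux.coeff_sub_eq_sum DaeheeAux.hE0, hB n] at hc
  have hterm : ∀ ℓ ∈ Finset.range (n+1),
      PowerSeries.coeff ℓ (((u ^ k : (PowerSeries (Polynomial ℚ))ˣ) :
          PowerSeries (Polynomial ℚ)) * onePlusTPowX)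
          * PowerSeries.coeff n (DaeheeAux.E ^ ℓ)
        = Polynomial.C ((n ! : ℚ)⁻¹) * (Polynomial.C (S n ℓ) * D ℓ) := by
    intro ℓ hℓ
    rw [hD ℓ, DaeheeAux.coeff_E_pow]
    have : Polynomial.C ((ℓ ! : ℚ)⁻¹) * D ℓ
          * Polynomial.C (PowerSeries.coeff n (DaeheeAux.E₀ ^ ℓ))
        = Polynomial.C ((ℓ ! : ℚ)⁻¹ * PowerSeries.coeff n (DaeheeAux.E₀ ^ ℓ)) * D ℓ := by
      rw [map_mul]; ring
    rw [this, hγ ℓ (Finset.mem_range.mp hℓ), map_mul]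
    ring
  rw [Finset.sum_congr rfl hterm, ← Finset.mul_sum] at hc
  have hCne : (Polynomial.C ((n ! : ℚ)⁻¹) : Polynomial ℚ) ≠ 0 := by
    simp [Nat.factorial_ne_zero]
  exact (mul_left_cancel₀ hCne hc.symm)
end

section
/- Let ᾱ = (α_0,…,α_{n-1}) be real numbers and r̄ = (r_0,…,r_{n-1}) nonnegative integers with |r| = r_0+⋯+r_{n-1}. Define the generalized Comtet numbers of the first kind s_ᾱ(n,i;r̄) by ∏_{i=0}^{n-1}(x-α_i)^{r_i} = ∑_{i=0}^{|r|} s_ᾱ(n,i;r̄) x^i. Then for positive reals ℓ_1,…,ℓ_k, the k-fold iterated integral ∫_0^{ℓ_1}⋯∫_0^{ℓ_k} ∏_{i=0}^{n-1}(x_1⋯x_k - α_i)^{r_i} dx_1⋯dx_k equals ∑_{j=0}^{|r|} s_ᾱ(n,j;r̄) · (ℓ_1 ℓ_2 ⋯ ℓ_k)^{j+1}/(j+1)^k. -/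
/-- The `k`-fold iterated integral `∫_0^{ℓ_1} ⋯ ∫_0^{ℓ_k} f(x_1,…,x_k) dx_k ⋯ dx_1`. -/
noncomputable def iteratedIntegral : (k : ℕ) → (Fin k → ℝ) → ((Fin k → ℝ) → ℝ) → ℝ
  | 0, _, f => f (fun i => i.elim0)
  | k + 1, ℓ, f =>
      ∫ x in (0:ℝ)..(ℓ 0), iteratedIntegral k (fun i => ℓ i.succ) (fun y => f (Fin.cons x y))

lemma iteratedIntegral_sum_pow : ∀ (k : ℕ) (ℓ : Fin k → ℝ) (m : ℕ) (c : ℕ → ℝ),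
    iteratedIntegral k ℓ (fun x => ∑ j ∈ Finset.range m, c j * (∏ i, x i) ^ j) =
      ∑ j ∈ Finset.range m, c j * (∏ i, ℓ i) ^ (j + 1) / ((j : ℝ) + 1) ^ k
  | 0, ℓ, m, c => by simp [iteratedIntegral]
  | k + 1, ℓ, m, c => by
    rw [iteratedIntegral]
    have h2 : ∀ x : ℝ,
        iteratedIntegral k (fun i => ℓ i.succ)
          (fun y : Fin k → ℝ => ∑ j ∈ Finset.range m, c j * (∏ i : Fin (k+1), Fin.cons x y i) ^ j) =
        ∑ j ∈ Finset.range m,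
          x ^ j * (c j * (∏ i : Fin k, ℓ i.succ) ^ (j + 1) / ((j : ℝ) + 1) ^ k) := by
      intro x
      have h : (fun y : Fin k → ℝ => ∑ j ∈ Finset.range m, c j * (∏ i : Fin (k+1), Fin.cons x y i) ^ j)
          = fun y => ∑ j ∈ Finset.range m, (c j * x ^ j) * (∏ i, y i) ^ j := by
        funext y
        refine Finset.sum_congr rfl fun j _ => ?_
        rw [Fin.prod_cons, mul_pow]; ring
      rw [h, iteratedIntegral_sum_pow k _ m (fun j => c j * x ^ j)]
      refine Finset.sum_congr rfl fun j _ => ?_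
      ring
    simp only [h2]
    rw [intervalIntegral.integral_finset_sum (fun j _ =>
      (by fun_prop : Continuous fun x : ℝ =>
        x ^ j * (c j * (∏ i : Fin k, ℓ i.succ) ^ (j + 1) / ((j : ℝ) + 1) ^ k)).intervalIntegrable _ _)]
    refine Finset.sum_congr rfl fun j _ => ?_
    rw [intervalIntegral.integral_mul_const, integral_pow]
    rw [Fin.prod_univ_succ]
    have hj : ((j : ℝ) + 1) ≠ 0 := by positivity
    field_simp
    ring

/-- Let `ᾱ = (α_0,…,α_{n-1})` be reals, `r̄ = (r_0,…,r_{n-1})` nonnegative integers with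
`|r| = r_0 + ⋯ + r_{n-1}`, and let the generalized Comtet numbers of the first kind
`s_ᾱ(n,j;r̄)` be defined by `∏_{i<n} (x - α_i)^{r_i} = ∑_{j=0}^{|r|} s_ᾱ(n,j;r̄) x^j`.
Then for positive reals `ℓ_1,…,ℓ_k`,
`∫_0^{ℓ_1}⋯∫_0^{ℓ_k} ∏_{i<n} (x_1⋯x_k - α_i)^{r_i} dx_1⋯dx_k
  = ∑_{j=0}^{|r|} s_ᾱ(n,j;r̄) (ℓ_1⋯ℓ_k)^{j+1}/(j+1)^k`. -/
theorem iteratedIntegral_generalized_factorial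
    (k n : ℕ) (α : ℕ → ℝ) (r : ℕ → ℕ) (sA : ℕ → ℝ)
    (hsA : ∀ x : ℝ, (∏ i ∈ Finset.range n, (x - α i) ^ (r i)) =
      ∑ j ∈ Finset.range ((∑ i ∈ Finset.range n, r i) + 1), sA j * x ^ j)
    (ℓ : Fin k → ℝ) (hℓ : ∀ i, 0 < ℓ i) :
    iteratedIntegral k ℓ (fun x => ∏ i ∈ Finset.range n, ((∏ j, x j) - α i) ^ (r i)) =
      ∑ j ∈ Finset.range ((∑ i ∈ Finset.range n, r i) + 1),
        sA j * (∏ i, ℓ i) ^ (j + 1) / ((j : ℝ) + 1) ^ k := by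
  have h : (fun x : Fin k → ℝ => ∏ i ∈ Finset.range n, ((∏ j, x j) - α i) ^ (r i)) =
      fun x => ∑ j ∈ Finset.range ((∑ i ∈ Finset.range n, r i) + 1), sA j * (∏ i, x i) ^ j :=
    funext fun x => hsA _
  rw [h, iteratedIntegral_sum_pow]
end

section
/- Define the Daehee polynomials D_n(x) by (log(1+t)/t)(1+t)^x = ∑_{n≥0} D_n(x) t^n/n!. Then for every nonnegative integer n, D_n(x) = ∑_{m=0}^n s(n,m) B_m(x), where s(n,m) are signed Stirling numbers of the first kind and B_m(x) are Bernoulli polynomials. -/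
open Nat

section Aux
open Polynomial PowerSeries

noncomputable def logQ : PowerSeries ℚ := PowerSeries.mk fun n => if n = 0 then 0 else (-1 : ℚ)^(n+1)/n
noncomputable def aa (N m : ℕ) : ℚ := PowerSeries.coeff N (logQ ^ m)
noncomputable def SS (N m : ℕ) : ℚ := (descPochhammer ℚ N).coeff m

lemma coeff_logQ (n : ℕ) : PowerSeries.coeff n logQ = if n = 0 then 0 else (-1 : ℚ)^(n+1)/n := by
  simp [logQ]

lemma one_add_X_mul_dlog : (1 + PowerSeries.X) * (PowerSeries.derivative ℚ logQ) = 1 := by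
  ext n
  rw [add_mul, one_mul, map_add]
  cases n with
  | zero =>
    simp [PowerSeries.coeff_derivative, coeff_logQ]
  | succ n =>
    rw [PowerSeries.coeff_succ_X_mul, PowerSeries.coeff_derivative, PowerSeries.coeff_derivative,
      coeff_logQ, coeff_logQ, PowerSeries.coeff_one]
    simp only [Nat.succ_ne_zero, if_false, Nat.add_eq_zero, and_false]
    field_simp
    push_cast
    ring


lemma constantCoeff_logQ : PowerSeries.constantCoeff logQ = 0 := by
  simp [logQ, ← PowerSeries.coeff_zero_eq_constantCoeff_apply]

lemma aa_zero_left (m : ℕ) : aa 0 m = if m = 0 then 1 else 0 := by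
  rw [aa, PowerSeries.coeff_zero_eq_constantCoeff_apply, map_pow, constantCoeff_logQ]
  cases m with
  | zero => simp
  | succ m => simp

lemma aa_eq_zero {N m : ℕ} (h : N < m) : aa N m = 0 := by
  induction m generalizing N with
  | zero => omega
  | succ m ih =>
    rw [aa, pow_succ, PowerSeries.coeff_mul, Finset.sum_eq_zero]
    rintro ⟨i, j⟩ hij
    rw [Finset.HasAntidiagonal.mem_antidiagonal] at hij
    simp only at hij
    rcases Nat.eq_zero_or_pos j with hj | hj
    · rw [hj, show (PowerSeries.coeff 0) logQ = 0 by simp [coeff_logQ], mul_zero]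
    · rw [← aa, ih (by omega), zero_mul]

lemma aa_rec (N m : ℕ) :
    ((m:ℚ)+1) * aa N m = ((N:ℚ)+1) * aa (N+1) (m+1) + (N:ℚ) * aa N (m+1) := by
  have key : (1 + PowerSeries.X) * (PowerSeries.derivative ℚ (logQ ^ (m+1)))
      = ((m+1 : ℕ) : PowerSeries ℚ) * logQ ^ m := by
    rw [Derivation.leibniz_pow, Nat.add_sub_cancel, smul_eq_mul, nsmul_eq_mul]
    calc (1 + PowerSeries.X) * (((m+1 : ℕ) : PowerSeries ℚ) * (logQ ^ m * PowerSeries.derivative ℚ logQ))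
        = ((m+1 : ℕ) : PowerSeries ℚ) * logQ ^ m * ((1 + PowerSeries.X) * PowerSeries.derivative ℚ logQ) := by ring
      _ = ((m+1 : ℕ) : PowerSeries ℚ) * logQ ^ m := by rw [one_add_X_mul_dlog, mul_one]
  have h := congrArg (PowerSeries.coeff N) key
  rw [add_mul, one_mul, map_add, show ((m+1 : ℕ) : PowerSeries ℚ) = PowerSeries.C ((m+1 : ℕ) : ℚ) from (map_natCast (PowerSeries.C) (m+1)).symm,
    PowerSeries.coeff_C_mul, PowerSeries.coeff_derivative, ← aa] at h
  push_cast at h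
  cases N with
  | zero =>
    rw [show ((PowerSeries.coeff 0) (PowerSeries.X * PowerSeries.derivative ℚ (logQ ^ (m+1)))) = 0 by
      rw [PowerSeries.coeff_zero_eq_constantCoeff_apply, map_mul]; simp] at h
    rw [← aa] at h
    push_cast at h ⊢
    linarith [h]
  | succ n =>
    rw [PowerSeries.coeff_succ_X_mul, PowerSeries.coeff_derivative, ← aa, ← aa] at h
    push_cast
    push_cast at h
    linarith [h]


lemma SS_zero_left (m : ℕ) : SS 0 m = if m = 0 then 1 else 0 := by
  rw [SS, descPochhammer_zero]
  cases m with
  | zero => simp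
  | succ m => simp [Polynomial.coeff_one]

lemma SS_zero_right (N : ℕ) : SS N 0 = if N = 0 then 1 else 0 := by
  rw [SS, Polynomial.coeff_zero_eq_eval_zero, descPochhammer_eval_zero]

lemma SS_eq_zero {N m : ℕ} (h : N < m) : SS N m = 0 := by
  apply Polynomial.coeff_eq_zero_of_natDegree_lt
  rwa [descPochhammer_natDegree]

lemma SS_rec_succ (N m : ℕ) : SS (N+1) (m+1) = SS N m - (N:ℚ) * SS N (m+1) := by
  rw [SS, SS, SS, descPochhammer_succ_right, show ((N:ℚ[X]) = Polynomial.C (N:ℚ)) from (Polynomial.C_eq_natCast _).symm]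
  rw [mul_sub, Polynomial.coeff_sub, Polynomial.coeff_mul_X, Polynomial.coeff_mul_C]
  ring

lemma aa_zero_right (N : ℕ) : aa N 0 = if N = 0 then 1 else 0 := by
  rw [aa, pow_zero]
  simp [PowerSeries.coeff_one]

lemma SA (N m : ℕ) : (N ! : ℚ) * aa N m = (m ! : ℚ) * SS N m := by
  induction N generalizing m with
  | zero => rw [aa_zero_left, SS_zero_left]; cases m <;> simp
  | succ N ih =>
    cases m with
    | zero => rw [aa_zero_right, SS_zero_right]; simp
    | succ m =>
      have h1 := aa_rec N m
      have h2 := ih m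
      have h3 := ih (m+1)
      rw [SS_rec_succ]
      push_cast [Nat.factorial_succ] at h3 ⊢
      linear_combination -(N ! : ℚ) * h1 + ((m:ℚ)+1) * h2 - (N:ℚ) * h3


lemma comp_id (N : ℕ) : (descPochhammer ℚ (N+1)).comp (Polynomial.X + 1)
    = descPochhammer ℚ (N+1) + Polynomial.C ((N:ℚ)+1) * descPochhammer ℚ N := by
  have h1 : (descPochhammer ℚ (N+1)).comp (Polynomial.X + 1) = (Polynomial.X + 1) * descPochhammer ℚ N := by
    rw [descPochhammer_succ_left, Polynomial.mul_comp, Polynomial.X_comp, Polynomial.comp_assoc]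
    congr 1
    rw [Polynomial.sub_comp, Polynomial.X_comp, Polynomial.one_comp, add_sub_cancel_right,
      Polynomial.comp_X]
  rw [h1, descPochhammer_succ_right,
    show ((N:ℚ[X]) = Polynomial.C (N:ℚ)) from (Polynomial.C_eq_natCast _).symm, map_add, map_one]
  ring

lemma coeff_comp (N k : ℕ) : ((descPochhammer ℚ (N+1)).comp (Polynomial.X + 1)).coeff k
    = ∑ j ∈ Finset.range (N+2), (j.choose k : ℚ) * SS (N+1) j := by
  rw [Polynomial.comp, Polynomial.eval₂_eq_sum_range' (Polynomial.C : ℚ →+* ℚ[X])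
    (by rw [descPochhammer_natDegree]; omega : (descPochhammer ℚ (N+1)).natDegree < N+2)]
  rw [Polynomial.finset_sum_coeff]
  apply Finset.sum_congr rfl
  intro j _
  rw [Polynomial.coeff_C_mul, Polynomial.coeff_X_add_one_pow, SS, mul_comm]

lemma htot (N k : ℕ) : ∑ j ∈ Finset.range (N+2), (j.choose k : ℚ) * SS (N+1) j
    = SS (N+1) k + ((N:ℚ)+1) * SS N k := by
  rw [← coeff_comp, comp_id, Polynomial.coeff_add, Polynomial.coeff_C_mul, ← SS, ← SS]

lemma T (N k : ℕ) : ∑ m ∈ Finset.Ico k (N+1), SS (N+1) (m+1) * ((m+1).choose k : ℚ)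
    = ((N:ℚ)+1) * SS N k := by
  rcases Nat.lt_or_ge k (N+1) with hk | hk
  · have hsplit : ∑ j ∈ Finset.range (N+2), (j.choose k : ℚ) * SS (N+1) j
        = ∑ j ∈ Finset.range (k+1), (j.choose k : ℚ) * SS (N+1) j
          + ∑ j ∈ Finset.Ico (k+1) (N+2), (j.choose k : ℚ) * SS (N+1) j := by
      rw [Finset.range_eq_Ico,
        ← Finset.sum_Ico_consecutive _ (Nat.zero_le (k+1)) (show k+1 ≤ N+2 by omega),
        ← Finset.range_eq_Ico]
    have h1 : ∑ j ∈ Finset.range (k+1), (j.choose k : ℚ) * SS (N+1) j = SS (N+1) k := by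
      rw [Finset.sum_range_succ, Finset.sum_eq_zero, zero_add, Nat.choose_self, Nat.cast_one, one_mul]
      intro j hj
      rw [Nat.choose_eq_zero_of_lt (Finset.mem_range.mp hj), Nat.cast_zero, zero_mul]
    have h2 : ∑ j ∈ Finset.Ico (k+1) (N+2), (j.choose k : ℚ) * SS (N+1) j
        = ∑ m ∈ Finset.Ico k (N+1), SS (N+1) (m+1) * ((m+1).choose k : ℚ) := by
      rw [Finset.sum_Ico_eq_sum_range, Finset.sum_Ico_eq_sum_range,
        show N+2-(k+1) = N+1-k by omega]
      apply Finset.sum_congr rfl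
      intro i _
      rw [show k+1+i = k+i+1 from by omega, mul_comm]
    rw [htot, h1, h2] at hsplit
    linarith [hsplit]
  · rw [Finset.Ico_eq_empty (by omega), Finset.sum_empty, SS_eq_zero (by omega), mul_zero]

lemma L5 (n : ℕ) :
    ∑ m ∈ Finset.range (n+1), Polynomial.C (((m:ℚ)+1) * SS (n+1) (m+1)) * Polynomial.X^m
    = Polynomial.C ((n:ℚ)+1) * ∑ m ∈ Finset.range (n+1), Polynomial.C (SS n m) * Polynomial.bernoulli m := by
  have step1 : ∀ m : ℕ, Polynomial.C (((m:ℚ)+1) * SS (n+1) (m+1)) * Polynomial.X^m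
      = ∑ k ∈ Finset.range (m+1),
          Polynomial.C (SS (n+1) (m+1) * ((m+1).choose k : ℚ)) * Polynomial.bernoulli k := by
    intro m
    have hb := Polynomial.sum_bernoulli m
    have hmono : Polynomial.monomial m ((m:ℚ)+1) = Polynomial.C ((m:ℚ)+1) * Polynomial.X^m := by
      rw [Polynomial.C_mul_X_pow_eq_monomial]
    have : Polynomial.C (((m:ℚ)+1) * SS (n+1) (m+1)) * Polynomial.X^m
        = Polynomial.C (SS (n+1) (m+1)) * (Polynomial.C ((m:ℚ)+1) * Polynomial.X^m) := by
      rw [map_mul]; ring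
    rw [this, ← hmono, ← hb, Finset.mul_sum]
    apply Finset.sum_congr rfl
    intro k _
    rw [Polynomial.smul_eq_C_mul, map_mul]
    ring
  calc ∑ m ∈ Finset.range (n+1), Polynomial.C (((m:ℚ)+1) * SS (n+1) (m+1)) * Polynomial.X^m
      = ∑ m ∈ Finset.Ico 0 (n+1), ∑ k ∈ Finset.Ico 0 (m+1),
          Polynomial.C (SS (n+1) (m+1) * ((m+1).choose k : ℚ)) * Polynomial.bernoulli k := by
        rw [Finset.range_eq_Ico]
        apply Finset.sum_congr rfl
        intro m _
        rw [step1 m, Finset.range_eq_Ico]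
    _ = ∑ k ∈ Finset.Ico 0 (n+1), ∑ m ∈ Finset.Ico k (n+1),
          Polynomial.C (SS (n+1) (m+1) * ((m+1).choose k : ℚ)) * Polynomial.bernoulli k := by
        rw [Finset.sum_Ico_Ico_comm]
    _ = Polynomial.C ((n:ℚ)+1) * ∑ m ∈ Finset.range (n+1), Polynomial.C (SS n m) * Polynomial.bernoulli m := by
        rw [Finset.mul_sum, Finset.range_eq_Ico]
        apply Finset.sum_congr rfl
        intro k _
        rw [← Finset.sum_mul, ← map_sum Polynomial.C _ _, T n k, map_mul]
        ring

lemma coeff_logP (i : ℕ) : PowerSeries.coeff i logOneAddP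
    = Polynomial.C (PowerSeries.coeff i logQ) := by
  rw [logOneAddP, PowerSeries.coeff_mk, coeff_logQ, apply_ite Polynomial.C, map_zero]

lemma desc_expand {j M : ℕ} (h : j < M) :
    descPochhammer ℚ j = ∑ m ∈ Finset.range M, Polynomial.C (SS j m) * Polynomial.X ^ m := by
  conv_lhs => rw [(descPochhammer ℚ j).as_sum_range' M (by rw [descPochhammer_natDegree]; omega)]
  apply Finset.sum_congr rfl
  intro m _
  rw [← Polynomial.C_mul_X_pow_eq_monomial, SS]

lemma coeff_P {j M : ℕ} (h : j < M) : PowerSeries.coeff j onePlusTPowX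
    = ∑ m ∈ Finset.range M, Polynomial.C (aa j m / m !) * Polynomial.X ^ m := by
  rw [onePlusTPowX, PowerSeries.coeff_mk, desc_expand h, Finset.mul_sum]
  apply Finset.sum_congr rfl
  intro m _
  rw [← mul_assoc, ← map_mul]
  congr 2
  have hj : (j ! : ℚ) ≠ 0 := Nat.cast_ne_zero.mpr (Nat.factorial_ne_zero j)
  have hm : (m ! : ℚ) ≠ 0 := Nat.cast_ne_zero.mpr (Nat.factorial_ne_zero m)
  rw [inv_mul_eq_div, div_eq_div_iff hj hm]
  linear_combination -SA j m

lemma aa_conv (n m : ℕ) : aa (n+1) (m+1)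
    = ∑ p ∈ Finset.HasAntidiagonal.antidiagonal (n+1), (PowerSeries.coeff p.1 logQ) * aa p.2 m := by
  rw [aa, show logQ^(m+1) = logQ * logQ^m from by ring, PowerSeries.coeff_mul]
  rfl

lemma L4 (n : ℕ) : PowerSeries.coeff (n+1) (logOneAddP * onePlusTPowX)
    = ∑ m ∈ Finset.range (n+2), Polynomial.C (aa (n+1) (m+1) / m !) * Polynomial.X ^ m := by
  rw [PowerSeries.coeff_mul]
  calc ∑ p ∈ Finset.HasAntidiagonal.antidiagonal (n+1),
        PowerSeries.coeff p.1 logOneAddP * PowerSeries.coeff p.2 onePlusTPowX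
      = ∑ p ∈ Finset.HasAntidiagonal.antidiagonal (n+1), ∑ m ∈ Finset.range (n+2),
          Polynomial.C ((PowerSeries.coeff p.1 logQ) * aa p.2 m / m !) * Polynomial.X ^ m := by
        apply Finset.sum_congr rfl
        rintro ⟨i, j⟩ hij
        rw [Finset.HasAntidiagonal.mem_antidiagonal] at hij
        rw [coeff_logP, coeff_P (show j < n+2 by omega), Finset.mul_sum]
        apply Finset.sum_congr rfl
        intro m _
        rw [← mul_assoc, ← map_mul, mul_div_assoc]
    _ = ∑ m ∈ Finset.range (n+2), ∑ p ∈ Finset.HasAntidiagonal.antidiagonal (n+1),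
          Polynomial.C ((PowerSeries.coeff p.1 logQ) * aa p.2 m / m !) * Polynomial.X ^ m :=
        Finset.sum_comm
    _ = ∑ m ∈ Finset.range (n+2), Polynomial.C (aa (n+1) (m+1) / m !) * Polynomial.X ^ m := by
        apply Finset.sum_congr rfl
        intro m _
        rw [← Finset.sum_mul, ← map_sum Polynomial.C _ _, aa_conv, ← Finset.sum_div]


end Aux

/-- If the Daehee polynomials `D_n(x)` are defined by
`(log(1+t)/t)(1+t)^x = ∑ D_n(x) t^n/n!` (equivalently
`log(1+t)·(1+t)^x = t · ∑ D_n(x) t^n/n!`), and `s(N,m)` are the signed Stirling numbers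
of the first kind (`(x)_N = ∑_m s(N,m) x^m`), then `D_n(x) = ∑_{m=0}^n s(n,m) B_m(x)`,
where `B_m(x)` are the Bernoulli polynomials (with `B_1(x) = x - 1/2`). -/
theorem daehee_poly_eq_stirling_sum_bernoulli
    (D : ℕ → Polynomial ℚ) (s : ℕ → ℕ → ℚ)
    (hD : ∀ n : ℕ, PowerSeries.coeff (n + 1) (logOneAddP * onePlusTPowX)
        = Polynomial.C ((n ! : ℚ)⁻¹) * D n)
    (hs : ∀ N : ℕ, descPochhammer ℚ N =
      ∑ m ∈ Finset.range (N + 1), Polynomial.C (s N m) * Polynomial.X ^ m) :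
    ∀ n : ℕ, D n = ∑ m ∈ Finset.range (n + 1), Polynomial.C (s n m) * Polynomial.bernoulli m := by
  have hSs : ∀ N m : ℕ, m < N + 1 → s N m = SS N m := by
    intro N m hm
    have h := congrArg (fun p : Polynomial ℚ => p.coeff m) (hs N)
    simp only [Polynomial.finset_sum_coeff, Polynomial.coeff_C_mul, Polynomial.coeff_X_pow] at h
    rw [Finset.sum_eq_single m (fun j _ hj => by rw [if_neg (Ne.symm hj), mul_zero])
      (fun hmem => absurd (Finset.mem_range.mpr hm) hmem), if_pos rfl, mul_one] at h
    rw [← h, SS]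
  intro n
  have hne : ((n ! : ℚ)) ≠ 0 := Nat.cast_ne_zero.mpr (Nat.factorial_ne_zero n)
  have hn1 : ((n : ℚ) + 1) ≠ 0 := by positivity
  have hd := hD n
  rw [L4 n] at hd
  have hDn : D n = Polynomial.C (n ! : ℚ) *
      ∑ m ∈ Finset.range (n+2), Polynomial.C (aa (n+1) (m+1) / m !) * Polynomial.X ^ m := by
    rw [hd, ← mul_assoc, ← map_mul, mul_inv_cancel₀ hne, map_one, one_mul]
  rw [hDn, Finset.mul_sum]
  have hterm : ∀ m : ℕ, Polynomial.C (n ! : ℚ) * (Polynomial.C (aa (n+1) (m+1) / m !) * Polynomial.X ^ m)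
      = Polynomial.C (((n:ℚ)+1)⁻¹) * (Polynomial.C (((m:ℚ)+1) * SS (n+1) (m+1)) * Polynomial.X ^ m) := by
    intro m
    rw [← mul_assoc, ← mul_assoc, ← map_mul, ← map_mul]
    congr 2
    have hm : ((m ! : ℚ)) ≠ 0 := Nat.cast_ne_zero.mpr (Nat.factorial_ne_zero m)
    have hsa := SA (n+1) (m+1)
    push_cast [Nat.factorial_succ] at hsa
    apply mul_left_cancel₀ hn1
    calc ((n:ℚ)+1) * ((n ! : ℚ) * (aa (n+1) (m+1) / m !))
        = (((n:ℚ)+1) * (n ! : ℚ) * aa (n+1) (m+1)) / m ! := by ring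
      _ = (((m:ℚ)+1) * (m ! : ℚ) * SS (n+1) (m+1)) / m ! := by rw [hsa]
      _ = ((m:ℚ)+1) * SS (n+1) (m+1) := by field_simp
      _ = ((n:ℚ)+1) * (((n:ℚ)+1)⁻¹ * (((m:ℚ)+1) * SS (n+1) (m+1))) := by
          rw [← mul_assoc, mul_inv_cancel₀ hn1, one_mul]
  calc ∑ m ∈ Finset.range (n+2), Polynomial.C (n ! : ℚ) * (Polynomial.C (aa (n+1) (m+1) / m !) * Polynomial.X ^ m)
      = ∑ m ∈ Finset.range (n+2), Polynomial.C (((n:ℚ)+1)⁻¹) *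
          (Polynomial.C (((m:ℚ)+1) * SS (n+1) (m+1)) * Polynomial.X ^ m) := by
        exact Finset.sum_congr rfl fun m _ => hterm m
    _ = Polynomial.C (((n:ℚ)+1)⁻¹) * ∑ m ∈ Finset.range (n+1),
          Polynomial.C (((m:ℚ)+1) * SS (n+1) (m+1)) * Polynomial.X ^ m := by
        rw [← Finset.mul_sum, Finset.sum_range_succ (n := n+1),
          SS_eq_zero (show n+1 < n+2 by omega), mul_zero, map_zero, zero_mul, add_zero]
    _ = ∑ m ∈ Finset.range (n+1), Polynomial.C (s n m) * Polynomial.bernoulli m := by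
        rw [L5 n, ← mul_assoc, ← map_mul, inv_mul_cancel₀ hn1, map_one, one_mul]
        exact Finset.sum_congr rfl fun m hm => by
          rw [hSs n m (Finset.mem_range.mp hm)]
end
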